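/- Every semi-Clifford permutation gate on n qubits lies in 𝒞ₙ, the n-th level of the Clifford hierarchy. -/

import Mathlib

open Matrix

/-- An `n`-qubit gate: a `2^n × 2^n` complex matrix with rows and columns indexed
by bitstrings `v ∈ 𝔽₂ⁿ`. -/
abbrev Gate (n : ℕ) := Matrix (Fin n → ZMod 2) (Fin n → ZMod 2) ℂ

def IsUnitaryGate {n : ℕ} (U : Gate n) : Prop :=
  U ∈ Matrix.unitaryGroup (Fin n → ZMod 2) ℂ

/-- The Pauli group `𝒫ₙ`: all matrices `c · X^u Z^v` with `c ∈ {1, -1, i, -i}`,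
which is exactly the set of matrices `c · P₁ ⊗ ⋯ ⊗ Pₙ` with `Pⱼ ∈ {I₂, X, Y, Z}`. -/
def PauliGroup (n : ℕ) : Set (Gate n) :=
  { P | ∃ (c : ℂ) (u v : Fin n → ZMod 2),
      (c = 1 ∨ c = -1 ∨ c = Complex.I ∨ c = -Complex.I) ∧
      P = Matrix.of fun a b =>
        if a = b + u then c * (-1 : ℂ) ^ (∑ i, (v i * b i).val) else 0 }

/-- The Clifford hierarchy: `𝒞₁ = 𝒫ₙ`, and for `k ≥ 2`,
`𝒞ₖ = {U unitary : U P U† ∈ 𝒞ₖ₋₁ for all P ∈ 𝒫ₙ}`.  (`CliffordHierarchy n k` is `𝒞ₖ`.) -/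
def CliffordHierarchy (n : ℕ) : ℕ → Set (Gate n)
  | 0 => PauliGroup n
  | 1 => PauliGroup n
  | k + 2 => { U | IsUnitaryGate U ∧
      ∀ P ∈ PauliGroup n, U * P * Uᴴ ∈ CliffordHierarchy n (k + 1) }

/-- The permutation gate mapping `|v⟩` to `|σ v⟩`. -/
def permGate {n : ℕ} (σ : Equiv.Perm (Fin n → ZMod 2)) : Gate n :=
  Matrix.of fun a b => if a = σ b then 1 else 0

def IsPermGate {n : ℕ} (U : Gate n) : Prop := ∃ σ, U = permGate σ

def IsDiagonalGate {n : ℕ} (U : Gate n) : Prop :=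
  IsUnitaryGate U ∧ ∀ a b, a ≠ b → U a b = 0

/-- A gate is semi-Clifford if it is `φ₁ d φ₂` with `φ₁, φ₂` Clifford and `d` a diagonal gate. -/
def IsSemiClifford {n : ℕ} (U : Gate n) : Prop :=
  ∃ φ₁ d φ₂ : Gate n, φ₁ ∈ CliffordHierarchy n 2 ∧ φ₂ ∈ CliffordHierarchy n 2 ∧
    IsDiagonalGate d ∧ U = φ₁ * d * φ₂

def IsCliffordPerm {n : ℕ} (U : Gate n) : Prop :=
  IsPermGate U ∧ U ∈ CliffordHierarchy n 2

namespace SC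

variable {n : ℕ}

abbrev V (n : ℕ) := Fin n → ZMod 2

lemma zmod2_cases (a : ZMod 2) : a = 0 ∨ a = 1 := by revert a; decide

/-- character of ZMod 2 -/
def χ (a : ZMod 2) : ℂ := (-1 : ℂ) ^ a.val

@[simp] lemma zmod2_val_zero : (0 : ZMod 2).val = 0 := rfl
@[simp] lemma zmod2_val_one : (1 : ZMod 2).val = 1 := rfl
@[simp] lemma zmod2_val_two : (2 : ZMod 2).val = 0 := rfl

@[simp] lemma χ_zero : χ 0 = 1 := rfl
@[simp] lemma χ_one : χ (1 : ZMod 2) = -1 := by simp [χ]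

lemma χ_add (a b : ZMod 2) : χ (a + b) = χ a * χ b := by
  rcases zmod2_cases a with ha | ha <;> rcases zmod2_cases b with hb | hb <;>
    subst ha <;> subst hb <;> simp [χ] <;> norm_num

lemma χ_ne_zero (a : ZMod 2) : χ a ≠ 0 := by
  rcases zmod2_cases a with h | h <;> subst h <;> simp

lemma χ_mul_self (a : ZMod 2) : χ a * χ a = 1 := by
  rcases zmod2_cases a with h | h <;> subst h <;> simp

@[simp] lemma χ_star (a : ZMod 2) : star (χ a) = χ a := by
  rcases zmod2_cases a with h | h <;> subst h <;> simp

lemma χ_inj {a b : ZMod 2} (h : χ a = χ b) : a = b := by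
  rcases zmod2_cases a with ha | ha <;> rcases zmod2_cases b with hb | hb <;>
    subst ha <;> subst hb <;> simp_all [χ] <;> norm_num at h

lemma χ_pm (a : ZMod 2) : χ a = 1 ∨ χ a = -1 := by
  rcases zmod2_cases a with h | h <;> subst h <;> simp

def dot (v w : V n) : ZMod 2 := ∑ i, v i * w i

lemma dot_add_right (v a b : V n) : dot v (a + b) = dot v a + dot v b := by
  simp [dot, mul_add, Finset.sum_add_distrib]

lemma dot_add_left (v w b : V n) : dot (v + w) b = dot v b + dot w b := by
  simp [dot, add_mul, Finset.sum_add_distrib]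

@[simp] lemma dot_zero_right (v : V n) : dot v 0 = 0 := by simp [dot]
@[simp] lemma dot_zero_left (v : V n) : dot (0 : V n) v = 0 := by simp [dot]

/-- standard basis vector -/
def e (i : Fin n) : V n := fun j => if i = j then 1 else 0

@[simp] lemma dot_e (v : V n) (i : Fin n) : dot v (e i) = v i := by
  simp [dot, e, Finset.sum_ite_eq, mul_ite]

@[simp] lemma dot_e_left (v : V n) (i : Fin n) : dot (e i) v = v i := by
  simp [dot, e, Finset.sum_ite_eq, ite_mul]

lemma eq_zero_of_dot_eq_zero {v : V n} (h : ∀ b, dot v b = 0) : v = 0 := by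
  funext i
  have := h (e i)
  simpa using this

lemma chi_sum (s : Finset (Fin n)) (f : Fin n → ZMod 2) :
    χ (∑ i ∈ s, f i) = ∏ i ∈ s, χ (f i) := by
  classical
  induction s using Finset.induction_on with
  | empty => simp
  | @insert a s' hx ih => rw [Finset.sum_insert hx, Finset.prod_insert hx, χ_add, ih]

lemma chi_dot_eq (v b : V n) :
    (-1 : ℂ) ^ (∑ i, (v i * b i).val) = χ (dot v b) := by
  rw [dot, chi_sum]
  rw [← Finset.prod_pow_eq_pow_sum]
  rfl

/-- generalized "monomial" matrix with support the graph of `f`. -/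
def gp (f : V n → V n) (γ : V n → ℂ) : Gate n :=
  Matrix.of fun a b => if a = f b then γ b else 0

lemma gp_mul (f g : V n → V n) (γ δ : V n → ℂ) :
    gp f γ * gp g δ = gp (fun b => f (g b)) (fun b => γ (g b) * δ b) := by
  ext a b
  simp only [gp, Matrix.mul_apply, Matrix.of_apply]
  rw [Finset.sum_eq_single (g b)]
  · by_cases h : a = f (g b) <;> simp [h]
  · intro k _ hk
    simp [hk]
  · intro h
    exact absurd (Finset.mem_univ _) h

lemma gp_conjT (f g : V n → V n) (hgf : ∀ x, g (f x) = x) (hfg : ∀ y, f (g y) = y)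
    (γ : V n → ℂ) :
    (gp f γ)ᴴ = gp g (fun b => star (γ (g b))) := by
  ext a b
  simp only [gp, Matrix.conjTranspose_apply, Matrix.of_apply]
  by_cases h : b = f a
  · have h2 : a = g b := by rw [h, hgf]
    rw [if_pos h, if_pos h2, h, hgf]
  · have h2 : a ≠ g b := by
      intro hc; exact h (by rw [hc, hfg])
    rw [if_neg h, if_neg h2, star_zero]

lemma gp_one : (gp (fun x => x) (fun _ => 1) : Gate n) = 1 := by
  ext a b
  simp [gp, Matrix.one_apply, eq_comm]

lemma gp_congr (f f' : V n → V n) (γ γ' : V n → ℂ) (hf : ∀ b, f b = f' b)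
    (hγ : ∀ b, γ b = γ' b) : gp f γ = gp f' γ' := by
  ext a b; simp [gp, hf b, hγ b]

lemma gp_unitary (f g : V n → V n) (hgf : ∀ x, g (f x) = x) (hfg : ∀ y, f (g y) = y)
    (γ : V n → ℂ) (hγ : ∀ b, star (γ b) * γ b = 1) :
    gp f γ ∈ Matrix.unitaryGroup (Fin n → ZMod 2) ℂ := by
  rw [Matrix.mem_unitaryGroup_iff']
  rw [Matrix.star_eq_conjTranspose, gp_conjT f g hgf hfg γ, gp_mul]
  rw [← gp_one]
  exact gp_congr _ _ _ _ (fun b => hgf b) (fun b => by rw [hgf b]; exact hγ b)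

/-- Pauli group elements in `gp` form. -/
lemma pauli_iff (P : Gate n) :
    P ∈ PauliGroup n ↔ ∃ (c : ℂ) (u v : V n),
      (c = 1 ∨ c = -1 ∨ c = Complex.I ∨ c = -Complex.I) ∧
      P = gp (fun b => b + u) (fun b => c * χ (dot v b)) := by
  constructor
  · rintro ⟨c, u, v, hc, rfl⟩
    exact ⟨c, u, v, hc, by ext a b; simp [gp, chi_dot_eq]⟩
  · rintro ⟨c, u, v, hc, rfl⟩
    exact ⟨c, u, v, hc, by ext a b; simp [gp, chi_dot_eq]⟩

/-- uniqueness of Pauli parameters -/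
lemma pauli_param_unique {c c' : ℂ} {u u' w w' : V n}
    (hc : c ≠ 0) (hc' : c' ≠ 0)
    (h : gp (fun b => b + u) (fun b => c * χ (dot w b)) =
         gp (fun b => b + u') (fun b => c' * χ (dot w' b))) :
    u = u' ∧ c = c' ∧ w = w' := by
  have key : ∀ a b : V n, (if a = b + u then c * χ (dot w b) else 0) =
      (if a = b + u' then c' * χ (dot w' b) else 0) := by
    intro a b
    have := congrFun (congrFun h a) b
    simpa [gp] using this
  have hu : u = u' := by
    by_contra hne
    have := key u 0
    rw [zero_add, zero_add, if_pos rfl, if_neg (fun hh => hne hh)] at this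
    exact (mul_ne_zero hc (χ_ne_zero _)) this
  subst hu
  have hval : ∀ b, c * χ (dot w b) = c' * χ (dot w' b) := by
    intro b
    have := key (b + u) b
    simpa using this
  have hcc : c = c' := by have := hval 0; simpa using this
  subst hcc
  refine ⟨rfl, rfl, ?_⟩
  have hw : ∀ b, dot w b = dot w' b := by
    intro b
    exact χ_inj (mul_left_cancel₀ hc (hval b))
  have hz : ∀ b, dot (w + w') b = 0 := by
    intro b; rw [dot_add_left, hw b]
    rcases zmod2_cases (dot w' b) with h0 | h0 <;> rw [h0] <;> decide
  have hz2 := eq_zero_of_dot_eq_zero hz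
  funext i
  have hi := congrFun hz2 i
  simp only [Pi.add_apply, Pi.zero_apply] at hi
  rcases zmod2_cases (w i) with h0 | h0 <;> rcases zmod2_cases (w' i) with h1 | h1 <;>
    rw [h0, h1] <;> rw [h0, h1] at hi <;> first | rfl | (exact absurd hi (by decide))

/-- the `Z^v` gate -/
def zGate (v : V n) : Gate n := gp (fun b => b) (fun b => χ (dot v b))

lemma zGate_mem_pauli (v : V n) : zGate v ∈ PauliGroup n := by
  rw [pauli_iff]
  exact ⟨1, 0, v, Or.inl rfl, by apply gp_congr <;> intro b <;> simp⟩

lemma zGate_mul (v v' : V n) : zGate v * zGate v' = zGate (v + v') := by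
  rw [zGate, zGate, gp_mul]
  apply gp_congr
  · intro b; rfl
  · intro b; rw [← χ_add, ← dot_add_left]

lemma zGate_diag (v : V n) (a b : V n) (hab : a ≠ b) : zGate v a b = 0 := by
  simp [zGate, gp, hab]

/-- membership unfolding for levels ≥ 2 -/
lemma mem_CH_succ_succ (k : ℕ) (U : Gate n) :
    U ∈ CliffordHierarchy n (k + 2) ↔ IsUnitaryGate U ∧
      ∀ P ∈ PauliGroup n, U * P * Uᴴ ∈ CliffordHierarchy n (k + 1) := Iff.rfl

lemma CH_one : CliffordHierarchy n 1 = PauliGroup n := rfl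
lemma CH_zero : CliffordHierarchy n 0 = PauliGroup n := rfl

lemma clifford_unitary {C : Gate n} (hC : C ∈ CliffordHierarchy n 2) : IsUnitaryGate C := hC.1

lemma clifford_conj_pauli {C : Gate n} (hC : C ∈ CliffordHierarchy n 2)
    {P : Gate n} (hP : P ∈ PauliGroup n) : C * P * Cᴴ ∈ PauliGroup n :=
  hC.2 P hP

lemma zmod2_add_self (a : ZMod 2) : a + a = 0 := by revert a; decide

lemma vadd_self (x u : V n) : x + u + u = x := by
  funext i
  simp only [Pi.add_apply]
  rw [add_assoc, zmod2_add_self, add_zero]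

lemma pauli_unitary {P : Gate n} (hP : P ∈ PauliGroup n) : IsUnitaryGate P := by
  rw [pauli_iff] at hP
  obtain ⟨c, u, v, hc, rfl⟩ := hP
  apply gp_unitary (g := fun b => b + u)
  · intro x; exact vadd_self x u
  · intro x; exact vadd_self x u
  · intro b
    rw [star_mul', χ_star, mul_mul_mul_comm]
    rw [χ_mul_self]
    rcases hc with h|h|h|h <;> subst h <;> simp [Complex.star_def]

/-- Pauli group is finite -/
lemma pauli_finite : (PauliGroup n).Finite := by
  have : PauliGroup n ⊆ (fun p : ℂ × V n × V n =>
      (Matrix.of fun a b => if a = b + p.2.1 then p.1 * (-1 : ℂ) ^ (∑ i, (p.2.2 i * b i).val) else 0 : Gate n)) ''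
      (({1, -1, Complex.I, -Complex.I} : Set ℂ) ×ˢ (Set.univ : Set (V n × V n))) := by
    rintro P ⟨c, u, v, hc, rfl⟩
    exact ⟨(c, u, v), ⟨by simpa using hc, trivial⟩, rfl⟩
  exact Set.Finite.subset (Set.Finite.image _ (Set.Finite.prod (Set.toFinite _) (Set.toFinite _))) this

/-- adjoint of a Clifford gate is Clifford -/
lemma clifford_adjoint {C : Gate n} (hC : C ∈ CliffordHierarchy n 2) :
    Cᴴ ∈ CliffordHierarchy n 2 := by
  have hCu : IsUnitaryGate C := hC.1
  have hCH : IsUnitaryGate (Cᴴ) := by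
    rw [IsUnitaryGate, ← Matrix.star_eq_conjTranspose]
    exact Unitary.star_mem hCu
  refine ⟨hCH, ?_⟩
  have hmap : Set.MapsTo (fun P => C * P * Cᴴ) (PauliGroup n) (PauliGroup n) :=
    fun P hP => hC.2 P hP
  have hinj : Set.InjOn (fun P => C * P * Cᴴ) (PauliGroup n) := by
    intro P hP Q hQ h
    simp only at h
    have h1 : Cᴴ * (C * P * Cᴴ) * C = Cᴴ * (C * Q * Cᴴ) * C := by rw [h]
    have hsC : Cᴴ * C = 1 := by
      have := Matrix.mem_unitaryGroup_iff'.mp hCu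
      rwa [Matrix.star_eq_conjTranspose] at this
    have hCs : C * Cᴴ = 1 := by
      have := Matrix.mem_unitaryGroup_iff.mp hCu
      rwa [Matrix.star_eq_conjTranspose] at this
    calc P = (Cᴴ * C) * P * (Cᴴ * C) := by rw [hsC]; rw [Matrix.one_mul, Matrix.mul_one]
    _ = Cᴴ * (C * P * Cᴴ) * C := by noncomm_ring
    _ = Cᴴ * (C * Q * Cᴴ) * C := h1
    _ = (Cᴴ * C) * Q * (Cᴴ * C) := by noncomm_ring
    _ = Q := by rw [hsC]; rw [Matrix.one_mul, Matrix.mul_one]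
  have hsurj : Set.SurjOn (fun P => C * P * Cᴴ) (PauliGroup n) (PauliGroup n) :=
    (pauli_finite.surjOn_iff_bijOn_of_mapsTo hmap).mpr
      ((pauli_finite.injOn_iff_bijOn_of_mapsTo hmap).mp hinj)
  intro P hP
  obtain ⟨Q, hQ, hQP⟩ := hsurj hP
  simp only at hQP
  have hsC : Cᴴ * C = 1 := by
    have := Matrix.mem_unitaryGroup_iff'.mp hCu
    rwa [Matrix.star_eq_conjTranspose] at this
  have : Cᴴ * P * (Cᴴ)ᴴ = Q := by
    rw [Matrix.conjTranspose_conjTranspose, ← hQP]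
    calc Cᴴ * (C * Q * Cᴴ) * C = (Cᴴ * C) * Q * (Cᴴ * C) := by noncomm_ring
    _ = Q := by rw [hsC, Matrix.one_mul, Matrix.mul_one]
  rw [CH_one, this]
  exact hQ

/-- conjugation by a Clifford preserves each level -/
lemma clifford_conj_mem (k : ℕ) {C U : Gate n} (hC : C ∈ CliffordHierarchy n 2)
    (hU : U ∈ CliffordHierarchy n k) : C * U * Cᴴ ∈ CliffordHierarchy n k := by
  induction k generalizing U with
  | zero => exact hC.2 U hU
  | succ k ih =>
    match k with
    | 0 => exact hC.2 U hU
    | Nat.succ k =>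
      obtain ⟨hUu, hUc⟩ := hU
      refine ⟨?_, ?_⟩
      · rw [IsUnitaryGate]
        have h1 : C ∈ Matrix.unitaryGroup (Fin n → ZMod 2) ℂ := hC.1
        have h2 : U ∈ Matrix.unitaryGroup (Fin n → ZMod 2) ℂ := hUu
        have h3 : Cᴴ ∈ Matrix.unitaryGroup (Fin n → ZMod 2) ℂ := by
          rw [← Matrix.star_eq_conjTranspose]; exact Unitary.star_mem h1
        exact Submonoid.mul_mem _ (Submonoid.mul_mem _ h1 h2) h3
      · intro P hP
        have hCs : Cᴴ ∈ CliffordHierarchy n 2 := clifford_adjoint hC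
        have hP' : Cᴴ * P * C ∈ PauliGroup n := by
          have := hCs.2 P hP
          rwa [Matrix.conjTranspose_conjTranspose] at this
        have hmid : U * (Cᴴ * P * C) * Uᴴ ∈ CliffordHierarchy n (k + 1) :=
          hUc _ hP'
        have := ih (U := U * (Cᴴ * P * C) * Uᴴ) hmid
        have heq : C * (U * (Cᴴ * P * C) * Uᴴ) * Cᴴ = C * U * Cᴴ * P * (C * U * Cᴴ)ᴴ := by
          rw [Matrix.conjTranspose_mul, Matrix.conjTranspose_mul, Matrix.conjTranspose_conjTranspose]
          noncomm_ring
        rwa [heq] at this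

/-- left multiplication by Clifford preserves levels ≥ 2 -/
lemma clifford_mul_mem (k : ℕ) {C U : Gate n} (hC : C ∈ CliffordHierarchy n 2)
    (hU : U ∈ CliffordHierarchy n (k + 2)) : C * U ∈ CliffordHierarchy n (k + 2) := by
  obtain ⟨hUu, hUc⟩ := hU
  refine ⟨?_, ?_⟩
  · exact Submonoid.mul_mem _ hC.1 hUu
  · intro P hP
    have heq : C * U * P * (C * U)ᴴ = C * (U * P * Uᴴ) * Cᴴ := by
      rw [Matrix.conjTranspose_mul]
      noncomm_ring
    rw [heq]
    exact clifford_conj_mem (k + 1) hC (hUc P hP)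

/-! ### Degree bounds via finite differences -/

def DegLE : ℕ → (V n → ZMod 2) → Prop
  | 0, h => ∀ x y, h x = h y
  | (k+1), h => ∀ t, DegLE k (fun x => h (x + t) + h x)

lemma degle_const (k : ℕ) (h : V n → ZMod 2) (hh : ∀ x y, h x = h y) : DegLE k h := by
  induction k generalizing h with
  | zero => exact hh
  | succ k ih =>
    intro t
    exact ih _ (fun x y => by rw [hh (x + t) x, hh (y + t) y, zmod2_add_self, zmod2_add_self])

lemma degle_mono {k k' : ℕ} (hkk : k ≤ k') {h : V n → ZMod 2} (hh : DegLE k h) : DegLE k' h := by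
  induction k' generalizing k h with
  | zero => obtain rfl := Nat.le_zero.mp hkk; exact hh
  | succ k' ih =>
    match k, hkk with
    | 0, _ => exact degle_const _ _ hh
    | (k+1), hkk =>
      intro t
      exact ih (by omega) (hh t)

lemma degle_add {k : ℕ} {h₁ h₂ : V n → ZMod 2} (H1 : DegLE k h₁) (H2 : DegLE k h₂) :
    DegLE k (fun x => h₁ x + h₂ x) := by
  induction k generalizing h₁ h₂ with
  | zero => intro x y; simp only; rw [H1 x y, H2 x y]
  | succ k ih =>
    intro t
    have := ih (H1 t) (H2 t)
    apply degle_mono (le_refl _)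
    convert this using 2 with x
    ring

lemma degle_translate {k : ℕ} {h : V n → ZMod 2} (H : DegLE k h) (a : V n) :
    DegLE k (fun x => h (x + a)) := by
  induction k generalizing h with
  | zero => intro x y; exact H _ _
  | succ k ih =>
    intro t
    have := ih (H t) -- DegLE k (fun x => (fun z => h (z+t) + h z) (x + a))
    convert this using 2 with x
    rw [add_right_comm]

lemma degle_cmul {k : ℕ} (a : ZMod 2) {h : V n → ZMod 2} (H : DegLE k h) :
    DegLE k (fun x => a * h x) := by
  rcases zmod2_cases a with ha | ha <;> subst ha
  · exact degle_const _ _ (fun x y => by rw [zero_mul, zero_mul])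
  · convert H using 2 with x
    rw [one_mul]

lemma vadd_self' (y : V n) : y + y = 0 := by
  funext i; simp only [Pi.add_apply, Pi.zero_apply]; exact zmod2_add_self _

/-- the set of invariance directions of a function is a submodule -/
def invSub (h : V n → ZMod 2) : Submodule (ZMod 2) (V n) where
  carrier := {w | ∀ x, h (x + w) = h x}
  add_mem' := by
    intro a b ha hb x
    rw [← add_assoc, hb, ha]
  zero_mem' := fun x => by rw [add_zero]
  smul_mem' := by
    intro c a ha
    rcases zmod2_cases c with hc | hc <;> subst hc
    · intro x; rw [zero_smul, add_zero]
    · intro x; rw [one_smul]; exact ha x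

lemma mem_invSub {h : V n → ZMod 2} {w : V n} : w ∈ invSub h ↔ ∀ x, h (x + w) = h x :=
  Iff.rfl

/-- invariance under a large subspace forces small degree -/
lemma degle_of_invariant (d : ℕ) (W : Submodule (ZMod 2) (V n)) (h : V n → ZMod 2)
    (hrank : n ≤ Module.finrank (ZMod 2) W + d)
    (hinv : ∀ x : V n, ∀ w ∈ W, h (x + w) = h x) : DegLE d h := by
  induction d generalizing W h with
  | zero =>
    have hW : W = ⊤ := by
      apply Submodule.eq_top_of_finrank_eq
      have h1 : Module.finrank (ZMod 2) W ≤ Module.finrank (ZMod 2) (V n) :=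
        Submodule.finrank_le W
      have h2 : Module.finrank (ZMod 2) (V n) = n := by
        rw [Module.finrank_pi]
        exact Fintype.card_fin n
      omega
    intro x y
    have hx : h (y + (x + y)) = h y := hinv y (x + y) (by rw [hW]; trivial)
    rwa [add_comm x y, ← add_assoc, vadd_self', zero_add] at hx
  | succ d ih =>
    intro t
    by_cases ht : t ∈ W
    · apply degle_const
      intro x y
      rw [hinv x t ht, hinv y t ht, zmod2_add_self, zmod2_add_self]
    · have hle : W ⊔ Submodule.span (ZMod 2) {t} ≤ invSub (fun x => h (x + t) + h x) := by
        apply sup_le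
        · intro w hw x
          simp only
          rw [add_right_comm, hinv (x + t) w hw, hinv x w hw]
        · rw [Submodule.span_le]
          intro w hw
          rw [Set.mem_singleton_iff] at hw
          subst hw
          intro x
          simp only
          rw [vadd_self x w]
          exact add_comm _ _
      apply ih (W ⊔ Submodule.span (ZMod 2) {t})
      · have hlt : W < W ⊔ Submodule.span (ZMod 2) {t} := by
          apply lt_of_le_of_ne le_sup_left
          intro hcon
          apply ht
          rw [hcon]
          exact Submodule.mem_sup_right (Submodule.mem_span_singleton_self t)
        have := Submodule.finrank_lt_finrank_of_lt hlt
        omega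
      · intro x w hw
        exact hle hw x

lemma degle_sum {k : ℕ} {ι : Type*} [DecidableEq ι] (s : Finset ι) (f : ι → V n → ZMod 2)
    (hf : ∀ i ∈ s, DegLE k (f i)) : DegLE k (fun x => ∑ i ∈ s, f i x) := by
  classical
  induction s using Finset.induction_on with
  | empty => exact degle_const _ _ (fun x y => by simp)
  | @insert a s' ha ih =>
    have : DegLE k (fun x => f a x + ∑ i ∈ s', f i x) :=
      degle_add (hf a (Finset.mem_insert_self a s'))
        (ih (fun i hi => hf i (Finset.mem_insert_of_mem hi)))
    convert this using 2 with x
    rw [Finset.sum_insert ha]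

lemma degle_dotG {k : ℕ} (w : V n) (G : V n → V n) (hG : ∀ i, DegLE k (fun x => G x i)) :
    DegLE k (fun x => dot w (G x)) := by
  have : DegLE k (fun x => ∑ i, w i * G x i) :=
    degle_sum Finset.univ _ (fun i _ => degle_cmul (w i) (hG i))
  exact this

lemma vec_eq_sum (x : V n) : x = ∑ i, x i • e i := by
  funext j
  rw [Finset.sum_apply]
  simp [e, Finset.sum_ite_eq, smul_eq_mul, mul_ite]

lemma degle_one_affine {h : V n → ZMod 2} (H : DegLE 1 h) :
    ∃ w : V n, ∀ x, h x = dot w x + h 0 := by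
  have hadd : ∀ x y, (h (x + y) + h 0) = (h x + h 0) + (h y + h 0) := by
    intro x y
    have := (H y) x 0
    simp only [zero_add] at this
    -- this : h (x + y) + h x = h y + h 0
    have h1 : h (x + y) = h y + h 0 + h x := by
      have := congrArg (fun z => z + h x) this
      simpa [add_assoc, zmod2_add_self] using this
    rw [h1]; ring
  set L : (V n) →+ ZMod 2 := AddMonoidHom.mk' (fun x => h x + h 0) hadd with hL
  refine ⟨fun i => h (e i) + h 0, ?_⟩
  intro x
  have hx : h x + h 0 = dot (fun i => h (e i) + h 0) x := by
    have h2 : L x = ∑ i, L (x i • e i) := by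
      conv_lhs => rw [vec_eq_sum x]
      exact map_sum L _ _
    have h3 : ∀ i, L (x i • e i) = (h (e i) + h 0) * x i := by
      intro i
      rcases zmod2_cases (x i) with hx0 | hx0 <;> rw [hx0]
      · rw [zero_smul, mul_zero, map_zero]
      · rw [one_smul, mul_one]; rfl
    rw [show h x + h 0 = L x from rfl, h2, dot]
    apply Finset.sum_congr rfl
    intro i _
    rw [h3 i]
  have := congrArg (fun z => z + h 0) hx
  simpa [add_assoc, zmod2_add_self] using this

lemma degle_congr {k : ℕ} {h h' : V n → ZMod 2} (he : ∀ x, h x = h' x) (H : DegLE k h) :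
    DegLE k h' := by
  have : h = h' := funext he
  rwa [this] at H

lemma c4_mul_star {c : ℂ} (hc : c = 1 ∨ c = -1 ∨ c = Complex.I ∨ c = -Complex.I) :
    c * star c = 1 := by
  rcases hc with h|h|h|h <;> subst h
  · simp
  · simp
  · rw [Complex.star_def, Complex.conj_I, mul_neg, Complex.I_mul_I, neg_neg]
  · rw [Complex.star_def, map_neg, Complex.conj_I, neg_neg, neg_mul, Complex.I_mul_I, neg_neg]

lemma c4_star_mul {c : ℂ} (hc : c = 1 ∨ c = -1 ∨ c = Complex.I ∨ c = -Complex.I) :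
    star c * c = 1 := by
  rw [mul_comm]; exact c4_mul_star hc

lemma c4_mul_chi {c : ℂ} (hc : c = 1 ∨ c = -1 ∨ c = Complex.I ∨ c = -Complex.I) (t : ZMod 2) :
    c * χ t = 1 ∨ c * χ t = -1 ∨ c * χ t = Complex.I ∨ c * χ t = -Complex.I := by
  rcases zmod2_cases t with h|h <;> subst h <;>
    rcases hc with h|h|h|h <;> subst h <;> simp <;> tauto

lemma vid1 (a c d p q : ZMod 2) : a + c + d + p + c + q = a + d + (p + q) := by
  revert a c d p q; decide

lemma vid2 (a1 a2 a3 a4 a5 a6 a7 a8 a9 : ZMod 2) :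
    (a1 + a2 + a3 + a4 + a5) + (a6 + a7 + a8) + (a1 + a2 + a3 + a9)
      = a6 + ((a5 + a9) + (a8 + (a4 + a7))) := by
  revert a1 a2 a3 a4 a5 a6 a7 a8 a9; decide

/-- THE key induction: shear-type monomial gates with degree bounds lie in the hierarchy. -/
lemma main_ind (Y : Submodule (ZMod 2) (V n)) :
    ∀ (k : ℕ), 1 ≤ k → ∀ (u : V n) (G : V n → V n), (∀ x, G x ∈ Y) →
    (∀ x y, y ∈ Y → G (x + y) = G x) →
    (∀ i, DegLE (k - 1) (fun x => G x i)) →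
    ∀ (c : ℂ), (c = 1 ∨ c = -1 ∨ c = Complex.I ∨ c = -Complex.I) →
    ∀ (w : V n) (H : V n → ZMod 2), DegLE k H → (∀ x y, y ∈ Y → H (x + y) = H x) →
    gp (fun x => x + u + G x) (fun x => c * χ (dot w x + H x)) ∈ CliffordHierarchy n k := by
  intro k
  induction k with
  | zero => intro h; omega
  | succ m ih =>
    intro _ u G hGY hGinv hGdeg c hc w H hHdeg hHinv
    -- inverse map of the shear
    set f : V n → V n := fun x => x + u + G x with hf
    set g : V n → V n := fun y => y + u + G (y + u) with hg
    have hgf : ∀ x, g (f x) = x := by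
      intro x
      show (x + u + G x) + u + G ((x + u + G x) + u) = x
      have h1 : x + u + G x + u = x + G x := by
        rw [add_right_comm (x + u) (G x) u, vadd_self x u]
      rw [h1, hGinv x (G x) (hGY x)]
      exact vadd_self x (G x)
    have hfg : ∀ y, f (g y) = y := by
      intro y
      show (y + u + G (y + u)) + u + G ((y + u) + G (y + u)) = y
      rw [hGinv (y + u) (G (y + u)) (hGY _)]
      rw [add_right_comm (y + u) (G (y + u)) u, vadd_self y u]
      exact vadd_self y (G (y + u))
    match m with
    | 0 =>
      -- base case: Pauli
      have hG0 : ∀ x, G x = G 0 := by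
        intro x
        funext i
        exact (hGdeg i) x 0
      obtain ⟨w₀, hw₀⟩ := degle_one_affine hHdeg
      rw [CH_one, pauli_iff]
      refine ⟨c * χ (H 0), u + G 0, w + w₀, c4_mul_chi hc _, ?_⟩
      apply gp_congr
      · intro b
        show b + u + G b = b + (u + G 0)
        rw [hG0 b, add_assoc]
      · intro b
        show c * χ (dot w b + H b) = c * χ (H 0) * χ (dot (w + w₀) b)
        rw [hw₀ b, dot_add_left]
        rw [show dot w b + (dot w₀ b + H 0) = H 0 + (dot w b + dot w₀ b) from by ring]
        rw [χ_add]
        ring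
    | Nat.succ m' =>
      rw [mem_CH_succ_succ]
      constructor
      · exact gp_unitary f g hgf hfg _ (fun b => by
          rw [star_mul', χ_star, mul_mul_mul_comm, χ_mul_self, mul_one]
          exact c4_star_mul hc)
      · intro P hP
        rw [pauli_iff] at hP
        obtain ⟨c', u', w', hc', rfl⟩ := hP
        rw [gp_conjT f g hgf hfg]
        rw [gp_mul, gp_mul]
        -- new parameters
        set G₂ : V n → V n := fun b => G (b + u) + G (b + u + u') with hG₂
        set H₂ : V n → ZMod 2 := fun b =>
          (H (b + u + u') + H (b + u)) + (dot w' (G (b + u)) + (dot w u' + dot w' u)) with hH₂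
        have hmain : gp (fun b => f (g b + u'))
            (fun b => (c * χ (dot w (g b + u') + H (g b + u'))) * (c' * χ (dot w' (g b))) *
              star (c * χ (dot w (g b) + H (g b)))) =
            gp (fun x => x + u' + G₂ x) (fun x => c' * χ (dot w' x + H₂ x)) := by
          apply gp_congr
          · intro b
            show (b + u + G (b + u) + u') + u + G ((b + u + G (b + u)) + u') = _
            have e1 : (b + u + G (b + u)) + u' = (b + u + u') + G (b + u) := by
              rw [add_right_comm (b + u) (G (b + u)) u']
            rw [e1, hGinv (b + u + u') (G (b + u)) (hGY _)]
            show b + u + u' + G (b + u) + u + G (b + u + u') = b + u' + G₂ b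
            show b + u + u' + G (b + u) + u + G (b + u + u') = b + u' + (G (b + u) + G (b + u + u'))
            funext i
            simp only [Pi.add_apply]
            exact vid1 (b i) (u i) (u' i) ((G (b + u)) i) ((G (b + u + u')) i)
          · intro b
            have hgb : g b = (b + u) + G (b + u) := rfl
            have e1 : g b + u' = (b + u + u') + G (b + u) := by
              rw [hgb, add_right_comm (b + u) (G (b + u)) u']
            have eH1 : H (g b + u') = H (b + u + u') := by
              rw [e1, hHinv (b + u + u') (G (b + u)) (hGY _)]
            have eH2 : H (g b) = H (b + u) := by
              rw [hgb, hHinv (b + u) (G (b + u)) (hGY _)]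
            have ed1 : dot w (g b + u') = dot w b + dot w u + dot w (G (b + u)) + dot w u' := by
              rw [e1]; simp only [dot_add_right]; try ring
            have ed2 : dot w' (g b) = dot w' b + dot w' u + dot w' (G (b + u)) := by
              rw [hgb]; simp only [dot_add_right]; try ring
            have ed3 : dot w (g b) = dot w b + dot w u + dot w (G (b + u)) := by
              rw [hgb]; simp only [dot_add_right]; try ring
            rw [star_mul', χ_star]
            rw [eH1, eH2, ed1, ed2, ed3]
            have harg : (dot w b + dot w u + dot w (G (b + u)) + dot w u' + H (b + u + u'))
                + (dot w' b + dot w' u + dot w' (G (b + u)))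
                + (dot w b + dot w u + dot w (G (b + u)) + H (b + u))
                = dot w' b + H₂ b := by
              rw [hH₂]
              simp only
              exact vid2 (dot w b) (dot w u) (dot w (G (b + u))) (dot w u') (H (b + u + u'))
                (dot w' b) (dot w' u) (dot w' (G (b + u))) (H (b + u))
            calc c * χ (dot w b + dot w u + dot w (G (b + u)) + dot w u' + H (b + u + u')) *
                  (c' * χ (dot w' b + dot w' u + dot w' (G (b + u)))) *
                  (star c * χ (dot w b + dot w u + dot w (G (b + u)) + H (b + u)))
                = (c * star c) * c' * (χ (dot w b + dot w u + dot w (G (b + u)) + dot w u' + H (b + u + u'))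
                  * χ (dot w' b + dot w' u + dot w' (G (b + u)))
                  * χ (dot w b + dot w u + dot w (G (b + u)) + H (b + u))) := by ring
            _ = c' * χ (dot w' b + H₂ b) := by
                rw [c4_mul_star hc, one_mul, ← χ_add, ← χ_add, harg]
            _ = c' * χ (dot w' b + H₂ b) := rfl
        rw [hmain]
        apply ih (by omega)
        · intro x
          exact Submodule.add_mem Y (hGY _) (hGY _)
        · intro x y hy
          rw [hG₂]
          simp only
          have e2 : x + y + u + u' = (x + u + u') + y := by abel
          have e1 : x + y + u = (x + u) + y := by abel
          rw [e2, e1, hGinv (x + u) y hy, hGinv (x + u + u') y hy]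
        · intro i
          have h0 : DegLE (m' + 1) (fun x => G x i) := hGdeg i
          have h1 : DegLE m' (fun x => G (x + u') i + G x i) := h0 u'
          have h2 := degle_translate h1 u
          apply degle_congr _ h2
          intro x
          show G (x + u + u') i + G (x + u) i = G₂ x i
          rw [hG₂]
          simp only [Pi.add_apply]
          exact add_comm _ _
        · exact hc'
        · -- DegLE (m' + 1) H₂
          have hH1 : DegLE (m' + 1) (fun x => H (x + u') + H x) := hHdeg u'
          have hH2 := degle_translate hH1 u
          have hdg : DegLE (m' + 1) (fun z => dot w' (G z)) :=
            degle_dotG w' G (fun i => degle_mono (by omega) (hGdeg i))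
          have hdgt := degle_translate hdg u
          have hconst : DegLE (m' + 1) (fun _ : V n => dot w u' + dot w' u) :=
            degle_const _ _ (fun _ _ => rfl)
          have hsum := degle_add hH2 (degle_add hdgt hconst)
          apply degle_congr _ hsum
          intro x
          show (H (x + u + u') + H (x + u)) + (dot w' (G (x + u)) + (dot w u' + dot w' u)) = H₂ x
          rw [hH₂]
        · intro x y hy
          rw [hH₂]
          simp only
          have e1 : x + y + u + u' = (x + u + u') + y := by abel
          have e2 : x + y + u = (x + u) + y := by abel
          rw [e1, e2, hHinv _ _ hy, hHinv _ _ hy, hGinv _ _ hy]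

def dotL (v : V n) : V n →ₗ[ZMod 2] ZMod 2 where
  toFun := dot v
  map_add' := dot_add_right v
  map_smul' := by
    intro c x
    rcases zmod2_cases c with hc | hc <;> subst hc
    · rw [zero_smul]
      simp only [RingHom.id_apply, zero_smul]
      simp [dot]
    · rw [one_smul]
      simp only [RingHom.id_apply, one_smul]

lemma exists_dot_rep (f : V n →ₗ[ZMod 2] ZMod 2) : ∃ w, ∀ x, f x = dot w x := by
  refine ⟨fun i => f (e i), ?_⟩
  intro x
  have h2 : f x = ∑ i, f (x i • e i) := by
    conv_lhs => rw [vec_eq_sum x]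
    exact map_sum f _ _
  rw [h2, dot]
  apply Finset.sum_congr rfl
  intro i _
  rcases zmod2_cases (x i) with hx0 | hx0 <;> rw [hx0]
  · rw [zero_smul, map_zero, mul_zero]
  · rw [one_smul, mul_one]

lemma affine_clifford (B : (V n) ≃ₗ[ZMod 2] (V n)) (b₀ : V n) :
    gp (fun x => B x + b₀) (fun _ => (1:ℂ)) ∈ CliffordHierarchy n 2 := by
  set f : V n → V n := fun x => B x + b₀ with hfd
  set g : V n → V n := fun y => B.symm (y + b₀) with hgd
  have hgf : ∀ x, g (f x) = x := by
    intro x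
    show B.symm ((B x + b₀) + b₀) = x
    rw [vadd_self (B x) b₀, B.symm_apply_apply]
  have hfg : ∀ y, f (g y) = y := by
    intro y
    show B (B.symm (y + b₀)) + b₀ = y
    rw [B.apply_symm_apply, vadd_self y b₀]
  constructor
  · exact gp_unitary f g hgf hfg _ (fun b => by simp)
  · intro P hP
    rw [pauli_iff] at hP
    obtain ⟨c, u, v, hc, rfl⟩ := hP
    rw [gp_conjT f g hgf hfg, gp_mul, gp_mul]
    obtain ⟨w', hw'⟩ := exists_dot_rep ((dotL v).comp (B.symm : V n →ₗ[ZMod 2] V n))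
    rw [CH_one, pauli_iff]
    refine ⟨c * χ (dot w' b₀), B u, w', c4_mul_chi hc _, ?_⟩
    apply gp_congr
    · intro b
      show B (B.symm (b + b₀) + u) + b₀ = b + B u
      rw [map_add, B.apply_symm_apply]
      rw [add_right_comm (b + b₀) (B u) b₀, vadd_self b b₀]
    · intro b
      show (1 * (c * χ (dot v (g b)))) * star (1:ℂ) = (c * χ (dot w' b₀)) * χ (dot w' b)
      rw [star_one, one_mul, mul_one]
      have hv : dot v (B.symm (b + b₀)) = dot w' (b + b₀) := hw' (b + b₀)
      show c * χ (dot v (B.symm (b + b₀))) = (c * χ (dot w' b₀)) * χ (dot w' b)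
      rw [hv, dot_add_right, χ_add]
      ring

/-! ### helpers for the final assembly -/

lemma c4_ne_zero {c : ℂ} (hc : c = 1 ∨ c = -1 ∨ c = Complex.I ∨ c = -Complex.I) : c ≠ 0 := by
  rcases hc with h|h|h|h <;> subst h <;> simp [Complex.I_ne_zero]

lemma veq_of_add_eq_zero {a b : V n} (h : a + b = 0) : a = b := by
  funext i
  have := congrFun h i
  simp only [Pi.add_apply, Pi.zero_apply] at this
  rcases zmod2_cases (a i) with h0|h0 <;> rcases zmod2_cases (b i) with h1|h1 <;>
    rw [h0, h1] <;> rw [h0, h1] at this <;> first | rfl | (exact absurd this (by decide))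

lemma vid3 (a b c : ZMod 2) : (a + b + c) + (a + c) + (b + c) + c = 0 := by
  revert a b c; decide

lemma mul_star_one {U : Gate n} (hU : IsUnitaryGate U) : U * Uᴴ = 1 := by
  have := Matrix.mem_unitaryGroup_iff.mp hU
  rwa [Matrix.star_eq_conjTranspose] at this

lemma star_mul_one {U : Gate n} (hU : IsUnitaryGate U) : Uᴴ * U = 1 := by
  have := Matrix.mem_unitaryGroup_iff'.mp hU
  rwa [Matrix.star_eq_conjTranspose] at this

/-- additive maps from `V n` are linear -/
def mkLin' {M : Type*} [AddCommGroup M] [Module (ZMod 2) M] (f : V n → M)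
    (hf : ∀ a b, f (a + b) = f a + f b) : V n →ₗ[ZMod 2] M where
  toFun := f
  map_add' := hf
  map_smul' := by
    have h0 : f 0 = 0 := by
      have := hf 0 0
      rw [add_zero] at this
      exact (left_eq_add.mp this)
    intro c x
    rcases zmod2_cases c with hc | hc <;> subst hc
    · simp only [RingHom.id_apply, zero_smul]
      exact h0
    · simp only [RingHom.id_apply, one_smul]

lemma gp_scalar (c : ℂ) : gp (fun b : V n => b + 0) (fun b => c * χ (dot 0 b)) = c • 1 := by
  ext a b
  simp only [gp, Matrix.of_apply, Matrix.smul_apply, Matrix.one_apply, add_zero, dot_zero_left,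
    χ_zero, mul_one, smul_eq_mul]
  by_cases h : a = b <;> simp [h]

lemma gp_eq_extract {f f' : V n → V n} {γ γ' : V n → ℂ}
    (hγ : ∀ b, γ b ≠ 0) (h : gp f γ = gp f' γ') (b : V n) :
    f b = f' b ∧ γ b = γ' b := by
  have h1 := congrFun (congrFun h (f b)) b
  simp only [gp, Matrix.of_apply, if_pos rfl] at h1
  have hff : f b = f' b := by
    by_contra hne
    rw [if_neg hne] at h1
    exact hγ b h1
  refine ⟨hff, ?_⟩
  rwa [if_pos hff] at h1

lemma permGate_eq_gp (σ : Equiv.Perm (V n)) : permGate σ = gp (⇑σ) (fun _ => (1:ℂ)) := rfl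

lemma perm_pauli_one (σ : Equiv.Perm (V 1)) : permGate σ ∈ PauliGroup 1 := by
  have hcases : ∀ x : V 1, x = 0 ∨ x = (fun _ => 1) := by
    intro x
    rcases zmod2_cases (x 0) with h|h
    · left; funext i; rw [Subsingleton.elim i 0]; exact h
    · right; funext i; rw [Subsingleton.elim i 0]; exact h
  have hone : (fun _ => (1 : ZMod 2)) ≠ (0 : V 1) := by
    intro hcon
    have := congrFun hcon 0
    exact absurd this (by decide)
  have hb : ∀ b, σ b = b + σ 0 := by
    intro b
    rcases hcases b with hb0 | hb1
    · subst hb0; rw [zero_add]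
    · subst hb1
      have hne : σ (fun _ => 1) ≠ σ 0 := fun hcon => hone (σ.injective hcon)
      rcases hcases (σ 0) with h0 | h0 <;> rcases hcases (σ (fun _ => 1)) with h1 | h1
      · exact absurd (h1.trans h0.symm) hne
      · rw [h0, h1, add_zero]
      · rw [h0, h1]
        exact (vadd_self' _).symm
      · exact absurd (h1.trans h0.symm) hne
  rw [pauli_iff]
  refine ⟨1, σ 0, 0, Or.inl rfl, ?_⟩
  rw [permGate_eq_gp]
  apply gp_congr
  · intro b; exact hb b
  · intro b; simp

lemma mul_zGate_apply (d : Gate n) (v : V n) (a b : V n) :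
    (d * zGate v) a b = d a b * χ (dot v b) := by
  rw [Matrix.mul_apply]
  rw [Finset.sum_eq_single b]
  · simp [zGate, gp]
  · intro k _ hk
    have : zGate v k b = 0 := by simp [zGate, gp, hk]
    rw [this, mul_zero]
  · intro h; exact absurd (Finset.mem_univ _) h

lemma zGate_mul_apply (v : V n) (d : Gate n) (a b : V n) :
    (zGate v * d) a b = χ (dot v a) * d a b := by
  rw [Matrix.mul_apply]
  rw [Finset.sum_eq_single a]
  · simp [zGate, gp]
  · intro k _ hk
    have : zGate v a k = 0 := by simp [zGate, gp, Ne.symm hk]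
    rw [this, zero_mul]
  · intro h; exact absurd (Finset.mem_univ _) h

lemma diag_zGate_comm {d : Gate n} (hd : ∀ a b, a ≠ b → d a b = 0) (v : V n) :
    d * zGate v = zGate v * d := by
  ext a b
  rw [mul_zGate_apply, zGate_mul_apply]
  by_cases hab : a = b
  · subst hab; ring
  · rw [hd a b hab, zero_mul, mul_zero]

/-- the dot-product bilinear form -/
def dotB : LinearMap.BilinForm (ZMod 2) (V n) :=
  LinearMap.mk₂ (ZMod 2) dot
    (fun a b c => dot_add_left a b c)
    (fun c a b => by
      rcases zmod2_cases c with hc|hc <;> subst hc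
      · rw [zero_smul, zero_smul]; simp [dot]
      · rw [one_smul, one_smul])
    (fun a b c => dot_add_right a b c)
    (fun c a b => by
      rcases zmod2_cases c with hc|hc <;> subst hc
      · rw [zero_smul, zero_smul]; simp [dot]
      · rw [one_smul, one_smul])

@[simp] lemma dotB_apply (a b : V n) : dotB a b = dot a b := rfl

lemma dot_comm (a b : V n) : dot a b = dot b a := by
  simp [dot, mul_comm]

lemma dotB_refl : (dotB (n := n)).IsRefl := by
  intro x y h
  rwa [dotB_apply, dot_comm, ← dotB_apply] at h

lemma dotB_nondeg : (dotB (n := n)).Nondegenerate := by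
  refine ⟨fun x hx => eq_zero_of_dot_eq_zero (fun b => hx b),
    fun x hx => eq_zero_of_dot_eq_zero (fun b => by rw [dot_comm]; exact hx b)⟩

lemma sandwich {U A : Gate n} (hU : IsUnitaryGate U) : U * (Uᴴ * A * U) * Uᴴ = A := by
  have h1 := mul_star_one hU
  calc U * (Uᴴ * A * U) * Uᴴ = (U * Uᴴ) * A * (U * Uᴴ) := by noncomm_ring
  _ = A := by rw [h1, Matrix.one_mul, Matrix.mul_one]

lemma sandwich' {U A : Gate n} (hU : IsUnitaryGate U) : Uᴴ * (U * A * Uᴴ) * U = A := by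
  have h1 := star_mul_one hU
  calc Uᴴ * (U * A * Uᴴ) * U = (Uᴴ * U) * A * (Uᴴ * U) := by noncomm_ring
  _ = A := by rw [h1, Matrix.one_mul, Matrix.mul_one]

lemma gp_pauli_mul (c c' : ℂ) (u u' w w' : V n) :
    gp (fun b => b + u) (fun b => c * χ (dot w b)) *
      gp (fun b => b + u') (fun b => c' * χ (dot w' b))
    = gp (fun b => b + (u' + u)) (fun b => (c * c' * χ (dot w u')) * χ (dot (w + w') b)) := by
  rw [gp_mul]
  apply gp_congr
  · intro b; rw [add_assoc]
  · intro b
    rw [dot_add_right, dot_add_left, χ_add, χ_add]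
    ring

lemma vid5 (a b c : ZMod 2) : a = b + (a + b + c) + c := by revert a b c; decide
lemma vid6 (a b c dd : ZMod 2) : (a + dd) + (b + dd) + c = a + b + c := by revert a b c dd; decide
lemma vid4 (s t u v : ZMod 2) : (s + v) + ((t + v) + (u + v)) = s + t + u + v := by
  revert s t u v; decide
lemma zmod2_sub (a b : ZMod 2) : a - b = a + b := by revert a b; decide
lemma vsub_eq (a b : V n) : a - b = a + b := by
  funext i; simp only [Pi.sub_apply, Pi.add_apply]; exact zmod2_sub _ _

end SC

open SC in
set_option maxHeartbeats 4000000 in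
/-- Every semi-Clifford permutation gate on `n` qubits lies in `𝒞ₙ`. -/
theorem semiClifford_perm_mem_level_n (n : ℕ) (hn : 1 ≤ n)
    (π : Gate n) (hπ : IsPermGate π) (hsc : IsSemiClifford π) :
    π ∈ CliffordHierarchy n n := by
  classical
  obtain ⟨σ, rfl⟩ := hπ
  rcases Nat.lt_or_ge n 2 with hlt | h2
  · have hn1 : n = 1 := by omega
    subst hn1
    exact perm_pauli_one σ
  obtain ⟨φ₁, d, φ₂, hφ₁, hφ₂, hd, hEq⟩ := hsc
  set Q : V n → Gate n := fun v => φ₂ᴴ * zGate v * φ₂ with hQdef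
  set Rg : V n → Gate n := fun v => φ₁ * zGate v * φ₁ᴴ with hRdef
  have hQP : ∀ v, Q v ∈ PauliGroup n := by
    intro v
    have h := (clifford_adjoint hφ₂).2 (zGate v) (zGate_mem_pauli v)
    rwa [Matrix.conjTranspose_conjTranspose] at h
  have hRP : ∀ v, Rg v ∈ PauliGroup n := fun v => hφ₁.2 _ (zGate_mem_pauli v)
  have hPI : ∀ v, permGate σ * Q v * (permGate σ)ᴴ = Rg v := by
    intro v
    rw [hEq]
    have hT : (φ₁ * d * φ₂)ᴴ = φ₂ᴴ * (dᴴ * φ₁ᴴ) := by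
      rw [Matrix.conjTranspose_mul, Matrix.conjTranspose_mul]
    rw [hT]
    have h2 : φ₂ * (φ₂ᴴ * zGate v * φ₂) * φ₂ᴴ = zGate v := sandwich hφ₂.1
    have hdz : d * zGate v * dᴴ = zGate v := by
      rw [diag_zGate_comm hd.2 v, Matrix.mul_assoc, mul_star_one hd.1, Matrix.mul_one]
    show φ₁ * d * φ₂ * Q v * (φ₂ᴴ * (dᴴ * φ₁ᴴ)) = Rg v
    calc φ₁ * d * φ₂ * Q v * (φ₂ᴴ * (dᴴ * φ₁ᴴ))
        = φ₁ * (d * (φ₂ * (φ₂ᴴ * zGate v * φ₂) * φ₂ᴴ) * dᴴ) * φ₁ᴴ := by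
          show φ₁ * d * φ₂ * (φ₂ᴴ * zGate v * φ₂) * (φ₂ᴴ * (dᴴ * φ₁ᴴ)) = _
          noncomm_ring
    _ = φ₁ * (d * zGate v * dᴴ) * φ₁ᴴ := by rw [h2]
    _ = Rg v := by rw [hdz]
  choose cQ uQ wQ hcQ hQeq using fun v => (pauli_iff (Q v)).mp (hQP v)
  choose cR uR wR hcR hReq using fun v => (pauli_iff (Rg v)).mp (hRP v)
  -- extraction
  have hγne : ∀ v b, (1:ℂ) * (cQ v * χ (dot (wQ v) (σ.symm b))) * star (1:ℂ) ≠ 0 := by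
    intro v b
    rw [star_one, one_mul, mul_one]
    exact mul_ne_zero (c4_ne_zero (hcQ v)) (χ_ne_zero _)
  have hgpEq : ∀ v, gp (fun b => σ (σ.symm b + uQ v))
      (fun b => (1:ℂ) * (cQ v * χ (dot (wQ v) (σ.symm b))) * star (1:ℂ))
      = gp (fun b => b + uR v) (fun b => cR v * χ (dot (wR v) b)) := by
    intro v
    have h := hPI v
    rw [hQeq v, hReq v, permGate_eq_gp] at h
    rw [gp_conjT (⇑σ) (⇑σ.symm) (fun x => σ.symm_apply_apply x)
      (fun y => σ.apply_symm_apply y)] at h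
    rw [gp_mul, gp_mul] at h
    exact h
  have E1 : ∀ v x, σ (x + uQ v) = σ x + uR v := by
    intro v x
    have h := (gp_eq_extract (hγne v) (hgpEq v) (σ x)).1
    rwa [Equiv.symm_apply_apply] at h
  have E2 : ∀ v x, cQ v * χ (dot (wQ v) x) = cR v * χ (dot (wR v) (σ x)) := by
    intro v x
    have h := (gp_eq_extract (hγne v) (hgpEq v) (σ x)).2
    rw [Equiv.symm_apply_apply] at h
    rwa [star_one, one_mul, mul_one] at h
  -- multiplicativity
  have hQmul : ∀ a b, Q (a + b) = Q a * Q b := by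
    intro a b
    have h1 : (φ₂ᴴ * zGate a * φ₂) * (φ₂ᴴ * zGate b * φ₂)
        = φ₂ᴴ * (zGate a * (φ₂ * φ₂ᴴ) * zGate b) * φ₂ := by noncomm_ring
    show φ₂ᴴ * zGate (a + b) * φ₂ = (φ₂ᴴ * zGate a * φ₂) * (φ₂ᴴ * zGate b * φ₂)
    rw [h1, mul_star_one hφ₂.1, Matrix.mul_one, zGate_mul]
  have hRmul : ∀ a b, Rg (a + b) = Rg a * Rg b := by
    intro a b
    have h1 : (φ₁ * zGate a * φ₁ᴴ) * (φ₁ * zGate b * φ₁ᴴ)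
        = φ₁ * (zGate a * (φ₁ᴴ * φ₁) * zGate b) * φ₁ᴴ := by noncomm_ring
    show φ₁ * zGate (a + b) * φ₁ᴴ = (φ₁ * zGate a * φ₁ᴴ) * (φ₁ * zGate b * φ₁ᴴ)
    rw [h1, star_mul_one hφ₁.1, Matrix.mul_one, zGate_mul]
  have paramQ : ∀ a b, uQ (a + b) = uQ b + uQ a ∧
      cQ (a + b) = cQ a * cQ b * χ (dot (wQ a) (uQ b)) ∧ wQ (a + b) = wQ a + wQ b := by
    intro a b
    have h2 : gp (fun x => x + uQ (a + b)) (fun x => cQ (a + b) * χ (dot (wQ (a + b)) x))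
        = gp (fun x => x + (uQ b + uQ a))
          (fun x => (cQ a * cQ b * χ (dot (wQ a) (uQ b))) * χ (dot (wQ a + wQ b) x)) := by
      rw [← hQeq (a + b), hQmul a b, hQeq a, hQeq b, gp_pauli_mul]
    exact pauli_param_unique (c4_ne_zero (hcQ (a + b)))
      (mul_ne_zero (mul_ne_zero (c4_ne_zero (hcQ a)) (c4_ne_zero (hcQ b))) (χ_ne_zero _)) h2
  have paramR : ∀ a b, uR (a + b) = uR b + uR a ∧
      cR (a + b) = cR a * cR b * χ (dot (wR a) (uR b)) ∧ wR (a + b) = wR a + wR b := by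
    intro a b
    have h2 : gp (fun x => x + uR (a + b)) (fun x => cR (a + b) * χ (dot (wR (a + b)) x))
        = gp (fun x => x + (uR b + uR a))
          (fun x => (cR a * cR b * χ (dot (wR a) (uR b))) * χ (dot (wR a + wR b) x)) := by
      rw [← hReq (a + b), hRmul a b, hReq a, hReq b, gp_pauli_mul]
    exact pauli_param_unique (c4_ne_zero (hcR (a + b)))
      (mul_ne_zero (mul_ne_zero (c4_ne_zero (hcR a)) (c4_ne_zero (hcR b))) (χ_ne_zero _)) h2
  have hsymR : ∀ a b, dot (wR a) (uR b) = dot (wR b) (uR a) := by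
    intro a b
    have h1 := (paramR a b).2.1
    have h2 := (paramR b a).2.1
    rw [add_comm b a, mul_comm (cR b) (cR a)] at h2
    have h3 : cR a * cR b * χ (dot (wR a) (uR b)) = cR a * cR b * χ (dot (wR b) (uR a)) :=
      h1.symm.trans h2
    exact χ_inj (mul_left_cancel₀
      (mul_ne_zero (c4_ne_zero (hcR a)) (c4_ne_zero (hcR b))) h3)
  -- linear maps
  set LuQ := mkLin' uQ (fun a b => ((paramQ a b).1).trans (add_comm _ _)) with hLuQ
  set LwQ := mkLin' wQ (fun a b => (paramQ a b).2.2) with hLwQ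
  set LuR := mkLin' uR (fun a b => ((paramR a b).1).trans (add_comm _ _)) with hLuR
  set LwR := mkLin' wR (fun a b => (paramR a b).2.2) with hLwR
  -- injectivity
  have hQinj : ∀ v, uQ v = 0 → wQ v = 0 → v = 0 := by
    intro v h1 h2
    have hqv : Q v = cQ v • 1 := by rw [hQeq v, h1, h2]; exact gp_scalar (cQ v)
    have hz : zGate v = cQ v • (1 : Gate n) := by
      have hz1 : φ₂ * Q v * φ₂ᴴ = zGate v := sandwich hφ₂.1
      rw [← hz1, hqv, Matrix.mul_smul, Matrix.smul_mul]
      congr 1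
      rw [Matrix.mul_one]
      exact mul_star_one hφ₂.1
    have hval : ∀ b : V n, χ (dot v b) = cQ v := by
      intro b
      have := congrFun (congrFun hz b) b
      simpa [zGate, gp, Matrix.smul_apply, Matrix.one_apply] using this
    have hc1 : cQ v = 1 := by have := hval 0; simpa using this.symm
    apply eq_zero_of_dot_eq_zero
    intro b
    apply χ_inj
    rw [hval b, hc1, χ_zero]
  have hRinj : ∀ v, uR v = 0 → wR v = 0 → v = 0 := by
    intro v h1 h2
    have hqv : Rg v = cR v • 1 := by rw [hReq v, h1, h2]; exact gp_scalar (cR v)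
    have hz : zGate v = cR v • (1 : Gate n) := by
      have hz1 : φ₁ᴴ * Rg v * φ₁ = zGate v := sandwich' hφ₁.1
      rw [← hz1, hqv, Matrix.mul_smul, Matrix.smul_mul]
      congr 1
      rw [Matrix.mul_one]
      exact star_mul_one hφ₁.1
    have hval : ∀ b : V n, χ (dot v b) = cR v := by
      intro b
      have := congrFun (congrFun hz b) b
      simpa [zGate, gp, Matrix.smul_apply, Matrix.one_apply] using this
    have hc1 : cR v = 1 := by have := hval 0; simpa using this.symm
    apply eq_zero_of_dot_eq_zero
    intro b
    apply χ_inj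
    rw [hval b, hc1, χ_zero]
  have hWQR : ∀ v, wR v = 0 → wQ v = 0 := by
    intro v hv
    have h0 : cQ v * χ (dot (wQ v) 0) = cR v := by
      have := E2 v 0
      rwa [hv, dot_zero_left, χ_zero, mul_one] at this
    rw [dot_zero_right, χ_zero, mul_one] at h0
    apply eq_zero_of_dot_eq_zero
    intro b
    have hb := E2 v b
    rw [hv, dot_zero_left, χ_zero, mul_one, ← h0] at hb
    have := mul_left_cancel₀ (c4_ne_zero (hcQ v)) (hb.trans (mul_one (cQ v)).symm)
    apply χ_inj
    rw [this, χ_zero]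
  have hE2d : ∀ v x, dot (wR v) (σ x) = dot (wQ v) x + dot (wR v) (σ 0) := by
    intro v x
    have h1 := E2 v x
    have h0 := E2 v 0
    rw [dot_zero_right, χ_zero, mul_one] at h0
    rw [h0] at h1
    have h2 : χ (dot (wR v) (σ 0)) * χ (dot (wQ v) x) = χ (dot (wR v) (σ x)) :=
      mul_left_cancel₀ (c4_ne_zero (hcR v)) (by rw [← mul_assoc]; exact h1)
    rw [← χ_add] at h2
    have := χ_inj h2
    rw [← this]
    exact (add_comm _ _)
  -- submodules
  set K := LinearMap.ker LwR with hK
  set W := LinearMap.range LwR with hW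
  set Y := Submodule.map LuR K with hY
  set U₁ := Submodule.map LuQ K with hU₁def
  have hfinV : Module.finrank (ZMod 2) (V n) = n := by
    rw [Module.finrank_pi]; exact Fintype.card_fin n
  have hKn : Module.finrank (ZMod 2) K ≤ n := by
    have h := Submodule.finrank_le K
    omega
  have hWK : Module.finrank (ZMod 2) W + Module.finrank (ZMod 2) K = n := by
    have h := LinearMap.finrank_range_add_finrank_ker LwR
    rw [hW, hK]
    omega
  have hYK : Module.finrank (ZMod 2) Y = Module.finrank (ZMod 2) K := by
    have h1 := LinearMap.finrank_range_add_finrank_ker (LuR.domRestrict K)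
    rw [LinearMap.range_domRestrict] at h1
    have hker : LinearMap.ker (LuR.domRestrict K) = ⊥ := by
      rw [eq_bot_iff]
      rintro ⟨v, hv⟩ hmem
      rw [LinearMap.mem_ker, LinearMap.domRestrict_apply] at hmem
      have : v = 0 := hRinj v hmem hv
      simpa [this] using Submodule.zero_mem _
    rw [hker, finrank_bot, add_zero] at h1
    exact h1
  have hUK : Module.finrank (ZMod 2) U₁ = Module.finrank (ZMod 2) K := by
    have h1 := LinearMap.finrank_range_add_finrank_ker (LuQ.domRestrict K)
    rw [LinearMap.range_domRestrict] at h1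
    have hker : LinearMap.ker (LuQ.domRestrict K) = ⊥ := by
      rw [eq_bot_iff]
      rintro ⟨v, hv⟩ hmem
      rw [LinearMap.mem_ker, LinearMap.domRestrict_apply] at hmem
      have : v = 0 := hQinj v hmem (hWQR v hv)
      simpa [this] using Submodule.zero_mem _
    rw [hker, finrank_bot, add_zero] at h1
    exact h1
  have hYle : Y ≤ dotB.orthogonal W := by
    rintro y ⟨v, hvK, rfl⟩
    intro w hw
    obtain ⟨v', rfl⟩ := hw
    show dotB (LwR v') (LuR v) = 0
    rw [dotB_apply]
    show dot (wR v') (uR v) = 0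
    rw [hsymR v' v]
    have hwv : wR v = 0 := LinearMap.mem_ker.mp hvK
    rw [hwv, dot_zero_left]
  have hYeq : Y = dotB.orthogonal W := by
    apply Submodule.eq_of_le_of_finrank_le hYle
    rw [LinearMap.BilinForm.finrank_orthogonal dotB_nondeg, hfinV, hYK]
    omega
  -- lambda
  have hzY : ∀ x y : V n, σ (x + y) + σ x + σ y + σ 0 ∈ Y := by
    intro x y
    rw [hYeq]
    intro w hw
    obtain ⟨v, rfl⟩ := hw
    show dot (wR v) (σ (x + y) + σ x + σ y + σ 0) = 0
    rw [dot_add_right, dot_add_right, dot_add_right, hE2d v (x + y), hE2d v x, hE2d v y,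
      dot_add_right]
    exact vid3 (dot (wQ v) x) (dot (wQ v) y) (dot (wR v) (σ 0))
  have hlamadd : ∀ a b : V n, Y.mkQ (σ (a + b) + σ 0) = Y.mkQ (σ a + σ 0) + Y.mkQ (σ b + σ 0) := by
    intro a b
    rw [show Y.mkQ (σ a + σ 0) + Y.mkQ (σ b + σ 0) = Y.mkQ ((σ a + σ 0) + (σ b + σ 0)) from
      (map_add Y.mkQ _ _).symm]
    rw [Submodule.mkQ_apply, Submodule.mkQ_apply, Submodule.Quotient.eq]
    rw [vsub_eq]
    have hre : (σ (a + b) + σ 0) + ((σ a + σ 0) + (σ b + σ 0))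
        = σ (a + b) + σ a + σ b + σ 0 := by
      funext i
      simp only [Pi.add_apply]
      exact vid4 (σ (a + b) i) (σ a i) (σ b i) (σ 0 i)
    rw [hre]
    exact hzY a b
  set lam := mkLin' (fun x => Y.mkQ (σ x + σ 0)) hlamadd with hlam
  have hlamapp : ∀ x, lam x = Y.mkQ (σ x + σ 0) := fun _ => rfl
  have hU1le : U₁ ≤ LinearMap.ker lam := by
    rintro p ⟨v, hvK, rfl⟩
    rw [LinearMap.mem_ker, hlamapp]
    have h1 : σ (LuQ v) = σ 0 + uR v := by
      have := E1 v 0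
      rwa [zero_add] at this
    rw [h1, add_right_comm (σ 0) (uR v) (σ 0), vadd_self' (σ 0), zero_add]
    rw [Submodule.mkQ_apply, Submodule.Quotient.mk_eq_zero]
    exact Submodule.mem_map_of_mem hvK
  have hrange : LinearMap.range lam = ⊤ := by
    rw [LinearMap.range_eq_top]
    intro z
    obtain ⟨y, rfl⟩ := Submodule.mkQ_surjective Y z
    exact ⟨σ.symm (y + σ 0), by rw [hlamapp, Equiv.apply_symm_apply, vadd_self y (σ 0)]⟩
  have hkerlam : Module.finrank (ZMod 2) (LinearMap.ker lam) = Module.finrank (ZMod 2) K := by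
    have h1 := LinearMap.finrank_range_add_finrank_ker lam
    rw [hrange, finrank_top] at h1
    have h2 := Submodule.finrank_quotient_add_finrank Y
    rw [hfinV] at h2
    omega
  have hU1eq : U₁ = LinearMap.ker lam := by
    apply Submodule.eq_of_le_of_finrank_le hU1le
    rw [hkerlam, hUK]
  -- building B
  have hinjK : ∀ a b : V n, a ∈ K → b ∈ K → uQ a = uQ b → a = b := by
    intro a b ha hb hab
    apply veq_of_add_eq_zero
    apply hQinj
    · have : uQ (a + b) = uQ a + uQ b := map_add LuQ a b
      rw [this, hab]
      exact vadd_self' (uQ b)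
    · apply hWQR
      have : wR (a + b) = wR a + wR b := map_add LwR a b
      rw [this]
      have h1 : wR a = 0 := LinearMap.mem_ker.mp ha
      have h2 : wR b = 0 := LinearMap.mem_ker.mp hb
      rw [h1, h2, add_zero]
  have hcod : ∀ v : K, (LuQ.domRestrict K) v ∈ U₁ := fun v => Submodule.mem_map_of_mem v.2
  set F1 : K →ₗ[ZMod 2] U₁ := LinearMap.codRestrict U₁ (LuQ.domRestrict K) hcod with hF1
  have hF1inj : Function.Injective F1 := by
    intro a b hab
    have h1 : uQ a.val = uQ b.val := congrArg Subtype.val hab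
    exact Subtype.ext (hinjK a.val b.val a.2 b.2 h1)
  have hF1surj : Function.Surjective F1 := by
    rintro ⟨y, hy⟩
    obtain ⟨v, hvK, rfl⟩ := hy
    exact ⟨⟨v, hvK⟩, rfl⟩
  set eU := LinearEquiv.ofBijective F1 ⟨hF1inj, hF1surj⟩ with heU
  set A' : U₁ →ₗ[ZMod 2] V n := (LuR.domRestrict K) ∘ₗ (eU.symm : U₁ →ₗ[ZMod 2] K) with hA'def
  have hA'app : ∀ z : U₁, A' z = uR ((eU.symm z) : K).val := fun z => rfl
  have hA'Y : ∀ z : U₁, A' z ∈ Y := by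
    intro z
    rw [hA'app]
    exact Submodule.mem_map_of_mem (eU.symm z).2
  have hA' : ∀ v (hv : v ∈ K), A' ⟨uQ v, Submodule.mem_map_of_mem hv⟩ = uR v := by
    intro v hv
    set z : U₁ := ⟨uQ v, Submodule.mem_map_of_mem hv⟩ with hz
    have hk : F1 (eU.symm z) = z := eU.apply_symm_apply z
    have hkval : uQ ((eU.symm z) : K).val = uQ v := congrArg Subtype.val hk
    have hkv : ((eU.symm z) : K).val = v := hinjK _ _ (eU.symm z).2 hv hkval
    rw [hA'app, hkv]
  obtain ⟨Cc, hCc⟩ := Submodule.exists_isCompl U₁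
  obtain ⟨sec, hsec⟩ := (Y.mkQ).exists_rightInverse_of_surjective (Submodule.range_mkQ Y)
  set P1 := Submodule.linearProjOfIsCompl U₁ Cc hCc with hP1
  set P2 := Submodule.linearProjOfIsCompl Cc U₁ hCc.symm with hP2
  set B : V n →ₗ[ZMod 2] V n :=
    A' ∘ₗ P1 + sec ∘ₗ lam ∘ₗ Cc.subtype ∘ₗ P2 with hB
  have hBapp : ∀ x, B x = A' (P1 x) + sec (lam ((P2 x : V n))) := fun x => rfl
  have hBmem : ∀ p (hp : p ∈ U₁), B p = A' ⟨p, hp⟩ := by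
    intro p hp
    rw [hBapp]
    have h1 : P1 p = ⟨p, hp⟩ := Submodule.linearProjOfIsCompl_apply_left hCc ⟨p, hp⟩
    have h2 : P2 p = 0 := Submodule.linearProjOfIsCompl_apply_right' hCc.symm hp
    rw [h1, h2]
    simp only [Submodule.coe_zero, map_zero, add_zero]
  have hmkQB : ∀ x, Y.mkQ (B x) = lam x := by
    intro x
    rw [hBapp, map_add]
    have h1 : Y.mkQ (A' (P1 x)) = 0 := by
      rw [Submodule.mkQ_apply, Submodule.Quotient.mk_eq_zero]
      exact hA'Y _
    have h2 : Y.mkQ (sec (lam ((P2 x : V n)))) = lam ((P2 x : V n)) :=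
      LinearMap.congr_fun hsec _
    rw [h1, h2, zero_add]
    have h3 : ((P1 x : V n)) + ((P2 x : V n)) = x :=
      Submodule.projection_add_projection_eq_self hCc x
    have h4 : lam ((P1 x : V n)) = 0 := hU1le (P1 x).2
    calc lam ((P2 x : V n)) = lam ((P1 x : V n)) + lam ((P2 x : V n)) := by rw [h4, zero_add]
    _ = lam ((P1 x : V n) + (P2 x : V n)) := (map_add lam _ _).symm
    _ = lam x := by rw [h3]
  have hBzero : ∀ x, B x = 0 → x = 0 := by
    intro x hx
    have h1 : lam x = 0 := by rw [← hmkQB, hx, map_zero]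
    have hxU : x ∈ U₁ := by rw [hU1eq]; exact LinearMap.mem_ker.mpr h1
    have h2 : A' ⟨x, hxU⟩ = 0 := by rw [← hBmem x hxU]; exact hx
    rw [hA'app] at h2
    have h3 : ((eU.symm ⟨x, hxU⟩) : K).val = 0 :=
      hRinj _ h2 (LinearMap.mem_ker.mp ((eU.symm ⟨x, hxU⟩) : K).2)
    have h4 : (eU.symm ⟨x, hxU⟩) = 0 := Subtype.ext h3
    have h5 : (⟨x, hxU⟩ : U₁) = 0 := by
      have := congrArg eU h4
      rwa [eU.apply_symm_apply, map_zero] at this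
    exact congrArg Subtype.val h5
  have hBinj : Function.Injective B := by
    rw [← LinearMap.ker_eq_bot]
    rw [eq_bot_iff]
    intro x hx
    have := hBzero x hx
    simpa [this] using Submodule.zero_mem _
  have hBsurj := LinearMap.injective_iff_surjective.mp hBinj
  set Beq := LinearEquiv.ofBijective B ⟨hBinj, hBsurj⟩ with hBeq
  have hBeqapp : ∀ z, Beq z = B z := fun z => rfl
  have hBuQ : ∀ v, v ∈ K → B (uQ v) = uR v := by
    intro v hv
    rw [hBmem (uQ v) (Submodule.mem_map_of_mem hv)]
    exact hA' v hv
  -- the shear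
  set gfun : V n → V n := fun x => Beq.symm (σ x + B x + σ 0) with hgfun
  have hBg : ∀ x, B (gfun x) = σ x + B x + σ 0 := by
    intro x
    have := Beq.apply_symm_apply (σ x + B x + σ 0)
    rwa [hBeqapp] at this
  have hvecY : ∀ x, σ x + B x + σ 0 ∈ Y := by
    intro x
    have h1 : Y.mkQ (σ x + B x + σ 0) = 0 := by
      rw [map_add, map_add]
      have e2 : Y.mkQ (B x) = lam x := hmkQB x
      have e3 : Y.mkQ (σ x) + Y.mkQ (σ 0) = lam x := by
        rw [← map_add]; exact (hlamapp x).symm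
      calc Y.mkQ (σ x) + Y.mkQ (B x) + Y.mkQ (σ 0)
          = (Y.mkQ (σ x) + Y.mkQ (σ 0)) + Y.mkQ (B x) := by abel
      _ = lam x + lam x := by rw [e2, e3]
      _ = Y.mkQ ((σ x + σ 0) + (σ x + σ 0)) := by
          rw [map_add, hlamapp]
      _ = 0 := by rw [vadd_self' (σ x + σ 0), map_zero]
    rwa [Submodule.mkQ_apply, Submodule.Quotient.mk_eq_zero] at h1
  have hgU : ∀ x, gfun x ∈ U₁ := by
    intro x
    have h2 : lam (gfun x) = 0 := by
      rw [← hmkQB (gfun x), hBg x, Submodule.mkQ_apply, Submodule.Quotient.mk_eq_zero]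
      exact hvecY x
    rw [hU1eq]
    exact LinearMap.mem_ker.mpr h2
  have hσα : ∀ x, σ x = B (x + gfun x) + σ 0 := by
    intro x
    rw [map_add, hBg x]
    funext i
    simp only [Pi.add_apply]
    exact vid5 (σ x i) (B x i) (σ 0 i)
  have hginv : ∀ x w, w ∈ U₁ → gfun (x + w) = gfun x := by
    intro x w hw
    obtain ⟨v, hvK, rfl⟩ := hw
    show Beq.symm (σ (x + LuQ v) + B (x + LuQ v) + σ 0) = Beq.symm (σ x + B x + σ 0)
    congr 1
    have hE : σ (x + LuQ v) = σ x + uR v := E1 v x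
    have hBv : B (LuQ v) = uR v := hBuQ v hvK
    rw [hE, map_add, hBv]
    funext i
    simp only [Pi.add_apply]
    exact vid6 (σ x i) (B x i) (σ 0 i) (uR v i)
  have hgdeg : ∀ i, DegLE (n - 1) (fun x => gfun x i) := by
    by_cases hbot : U₁ = ⊥
    · have hg0 : ∀ x, gfun x = 0 := by
        intro x
        have := hgU x
        rw [hbot] at this
        simpa using this
      intro i
      exact degle_const _ _ (fun x y => by rw [hg0 x, hg0 y])
    · intro i
      apply degle_of_invariant (n - 1) U₁
      · have hnt : Nontrivial U₁ := Submodule.nontrivial_iff_ne_bot.mpr hbot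
        have hpos : 0 < Module.finrank (ZMod 2) U₁ := Module.finrank_pos_iff.mpr hnt
        omega
      · intro x w hw
        show gfun (x + w) i = gfun x i
        rw [hginv x w hw]
  have hshear : gp (fun x => x + 0 + gfun x)
      (fun x => 1 * χ (dot 0 x + (fun _ : V n => (0 : ZMod 2)) x)) ∈ CliffordHierarchy n n :=
    main_ind U₁ n hn 0 gfun hgU (fun x y hy => hginv x y hy) hgdeg 1 (Or.inl rfl) 0
      (fun _ => 0) (degle_const n _ (fun _ _ => rfl)) (fun _ _ _ => rfl)
  have hdecomp : permGate σ = gp (fun x => Beq x + σ 0) (fun _ => (1:ℂ)) *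
      gp (fun x => x + 0 + gfun x) (fun x => 1 * χ (dot 0 x + (fun _ : V n => (0:ZMod 2)) x)) := by
    rw [permGate_eq_gp, gp_mul]
    apply gp_congr
    · intro b
      show σ b = Beq (b + 0 + gfun b) + σ 0
      rw [hBeqapp, add_zero]
      exact hσα b
    · intro b
      simp
  rw [hdecomp]
  obtain ⟨m, hm⟩ : ∃ m, n = m + 2 := ⟨n - 2, by omega⟩
  subst hm
  exact clifford_mul_mem m (affine_clifford Beq (σ 0)) hshear
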